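/- Let G be a simple graph on vertex set V with a proper coloring c : V → ZMod 2 (so G is bipartite), and let k ≥ 1 be a natural number. Form the k-blowup of G on V × ZMod k, and for each pair (i,j) ∈ ZMod k × ZMod k define the set S_{i,j} = { (v,l) : (c v = 0 and l = i) or (c v = 1 and l = j) }. Then (1) for every edge of the k-blowup there is exactly one pair (i,j) with both endpoints in S_{i,j}, and (2) for every s ∈ ZMod k, every vertex (v,l) of the k-blowup belongs to exactly one set S_{i,j} with i + j = s. -/
import Mathlib


/-- The `k`-blowup of a simple graph `G` on `V`, here taken on `V × ZMod k`:
`(u,i)` and `(v,j)` are adjacent iff `u` and `v` are adjacent in `G`. -/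
def zblowup {V : Type*} (G : SimpleGraph V) (k : ℕ) : SimpleGraph (V × ZMod k) :=
  G.comap Prod.fst

/-- Membership of a blowup vertex `p = (v, l)` in the set `S_{i,j}` for a 2-coloring:
`(v,l) ∈ S_{i,j}` iff (`c v = 0` and `l = i`) or (`c v = 1` and `l = j`). -/
def memS2 {V : Type*} {k : ℕ} (c : V → ZMod 2) (i j : ZMod k) (p : V × ZMod k) : Prop :=
  (c p.1 = 0 ∧ p.2 = i) ∨ (c p.1 = 1 ∧ p.2 = j)

/-- If `c` is a proper 2-coloring of `G` (so `G` is bipartite) and `k ≥ 1`, then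
(1) every edge of the `k`-blowup has both endpoints in exactly one set `S_{i,j}`, and
(2) for every `s : ZMod k`, every vertex of the `k`-blowup belongs to exactly one set
`S_{i,j}` with `i + j = s`. -/
theorem blowup_bipartite_coloring_groups {V : Type*} (G : SimpleGraph V)
    (c : V → ZMod 2) (hc : ∀ {u v : V}, G.Adj u v → c u ≠ c v)
    (k : ℕ) (hk : 1 ≤ k) :
    (∀ p q : V × ZMod k, (zblowup G k).Adj p q →
        ∃! ij : ZMod k × ZMod k, memS2 c ij.1 ij.2 p ∧ memS2 c ij.1 ij.2 q) ∧
    (∀ s : ZMod k, ∀ p : V × ZMod k,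
        ∃! ij : ZMod k × ZMod k, ij.1 + ij.2 = s ∧ memS2 c ij.1 ij.2 p) := by
  have h2 : ∀ x : ZMod 2, x = 0 ∨ x = 1 := by decide
  have h01 : (0 : ZMod 2) ≠ 1 := by decide
  constructor
  · intro p q hpq
    have hadj : G.Adj p.1 q.1 := hpq
    have hne := hc hadj
    rcases h2 (c p.1) with h0 | h1
    · have hq1 : c q.1 = 1 := by
        rcases h2 (c q.1) with h | h
        · exact absurd (h0.trans h.symm) hne
        · exact h
      refine ⟨(p.2, q.2), ⟨Or.inl ⟨h0, rfl⟩, Or.inr ⟨hq1, rfl⟩⟩, ?_⟩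
      rintro ⟨i, j⟩ ⟨hp, hq⟩
      simp only [Prod.mk.injEq]
      rcases hp with ⟨_, hi⟩ | ⟨h, _⟩
      · rcases hq with ⟨h, _⟩ | ⟨_, hj⟩
        · exact absurd (h.symm.trans hq1) h01
        · exact ⟨hi.symm, hj.symm⟩
      · exact absurd (h0.symm.trans h) h01
    · have hq0 : c q.1 = 0 := by
        rcases h2 (c q.1) with h | h
        · exact h
        · exact absurd (h1.trans h.symm) hne
      refine ⟨(q.2, p.2), ⟨Or.inr ⟨h1, rfl⟩, Or.inl ⟨hq0, rfl⟩⟩, ?_⟩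
      rintro ⟨i, j⟩ ⟨hp, hq⟩
      simp only [Prod.mk.injEq]
      rcases hp with ⟨h, _⟩ | ⟨_, hj⟩
      · exact absurd (h.symm.trans h1) h01
      · rcases hq with ⟨_, hi⟩ | ⟨h, _⟩
        · exact ⟨hi.symm, hj.symm⟩
        · exact absurd (hq0.symm.trans h) h01
  · intro s p
    rcases h2 (c p.1) with h0 | h1
    · refine ⟨(p.2, s - p.2), ⟨by ring, Or.inl ⟨h0, rfl⟩⟩, ?_⟩
      rintro ⟨i, j⟩ ⟨hs, hp⟩
      simp only [Prod.mk.injEq]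
      rcases hp with ⟨_, hi⟩ | ⟨h, _⟩
      · subst hi
        exact ⟨rfl, eq_sub_of_add_eq' hs⟩
      · exact absurd (h0.symm.trans h) h01
    · refine ⟨(s - p.2, p.2), ⟨by ring, Or.inr ⟨h1, rfl⟩⟩, ?_⟩
      rintro ⟨i, j⟩ ⟨hs, hp⟩
      simp only [Prod.mk.injEq]
      rcases hp with ⟨h, _⟩ | ⟨_, hj⟩
      · exact absurd (h.symm.trans h1) h01
      · subst hj
        exact ⟨eq_sub_of_add_eq hs, rfl⟩
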